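/- Let α, β be real numbers with α < β. Then Θ_{[α,β]} : ℝ → ℝ is strictly monotone increasing and restricts to a homeomorphism from ℝ onto the open interval (α, β); it is a C¹-function whose derivative is the continuous function given by e^{t−α}/2 − e^{t−β}/2 for t ≤ α, by 1 − e^{α−t}/2 − e^{t−β}/2 for α ≤ t ≤ β, and by −e^{α−t}/2 + e^{β−t}/2 for t ≥ β. -/

import Mathlib

/-- The clipping function `θ_{[α,β]}(t) = max(α, min(β, t))`. -/
noncomputable def thetaClip (α β t : ℝ) : ℝ := max α (min β t)

/-- The smoothed clipping function
`Θ_{[α,β]}(t) = θ_{[α,β]}(t) + e^{-|α-t|}/2 - e^{-|β-t|}/2`. -/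
noncomputable def ThetaClip (α β t : ℝ) : ℝ :=
  thetaClip α β t + Real.exp (-|α - t|) / 2 - Real.exp (-|β - t|) / 2

/-- The derivative of `Θ_{[α,β]}`, given piecewise. -/
noncomputable def ThetaClipDeriv (α β t : ℝ) : ℝ :=
  if t ≤ α then Real.exp (t - α) / 2 - Real.exp (t - β) / 2
  else if t ≤ β then 1 - Real.exp (α - t) / 2 - Real.exp (t - β) / 2
  else -Real.exp (α - t) / 2 + Real.exp (β - t) / 2

/-- Smoothed positive part: `φ(x) = max 0 x + e^{-|x|}/2`. -/
noncomputable def phiAux (x : ℝ) : ℝ := max 0 x + Real.exp (-|x|) / 2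

/-- The derivative of `phiAux`. -/
noncomputable def phiAuxDeriv (x : ℝ) : ℝ :=
  if x ≤ 0 then Real.exp x / 2 else 1 - Real.exp (-x) / 2

lemma phiAux_of_nonpos {x : ℝ} (hx : x ≤ 0) : phiAux x = Real.exp x / 2 := by
  simp [phiAux, max_eq_left hx, abs_of_nonpos hx]

lemma phiAux_of_nonneg {x : ℝ} (hx : 0 ≤ x) : phiAux x = x + Real.exp (-x) / 2 := by
  simp [phiAux, max_eq_right hx, abs_of_nonneg hx]

lemma hasDerivAt_phiAux (x : ℝ) : HasDerivAt phiAux (phiAuxDeriv x) x := by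
  have hexp : ∀ y : ℝ, HasDerivAt (fun z : ℝ => Real.exp z / 2) (Real.exp y / 2) y :=
    fun y => (Real.hasDerivAt_exp y).div_const 2
  have hlin : ∀ y : ℝ, HasDerivAt (fun z : ℝ => z + Real.exp (-z) / 2)
      (1 - Real.exp (-y) / 2) y := by
    intro y
    have h1 : HasDerivAt (fun z : ℝ => Real.exp (-z)) (-Real.exp (-y)) y := by
      simpa [Function.comp_def] using (Real.hasDerivAt_exp (-y)).comp y (hasDerivAt_neg y)
    have : HasDerivAt (fun z : ℝ => z + Real.exp (-z) / 2) (1 + -Real.exp (-y) / 2) y :=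
      (hasDerivAt_id y).add (h1.div_const 2)
    convert this using 1
    ring
  rcases lt_trichotomy x 0 with hx | hx | hx
  · have heq : phiAux =ᶠ[nhds x] fun z : ℝ => Real.exp z / 2 := by
      filter_upwards [Iio_mem_nhds hx] with y hy
      exact phiAux_of_nonpos (le_of_lt hy)
    have := (hexp x).congr_of_eventuallyEq heq
    simpa [phiAuxDeriv, hx.le] using this
  · subst hx
    have hL : HasDerivWithinAt phiAux (Real.exp 0 / 2) (Set.Iic 0) 0 :=
      (hexp 0).hasDerivWithinAt.congr (fun y hy => phiAux_of_nonpos hy)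
        (phiAux_of_nonpos le_rfl)
    have hR : HasDerivWithinAt phiAux (Real.exp 0 / 2) (Set.Ici 0) 0 := by
      have : HasDerivWithinAt phiAux (1 - Real.exp (-0) / 2) (Set.Ici 0) 0 :=
        (hlin 0).hasDerivWithinAt.congr
        (fun y (hy : y ∈ Set.Ici 0) => phiAux_of_nonneg hy) (phiAux_of_nonneg le_rfl)
      convert this using 1
      simp
      ring
    have := hL.union hR
    rw [Set.Iic_union_Ici] at this
    simpa [phiAuxDeriv] using this.hasDerivAt (by simp)
  · have heq : phiAux =ᶠ[nhds x] fun z : ℝ => z + Real.exp (-z) / 2 := by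
      filter_upwards [Ioi_mem_nhds hx] with y hy
      exact phiAux_of_nonneg (le_of_lt hy)
    have := (hlin x).congr_of_eventuallyEq heq
    simpa [phiAuxDeriv, not_le.mpr hx] using this
  
lemma continuous_phiAuxDeriv : Continuous phiAuxDeriv := by
  unfold phiAuxDeriv
  apply Continuous.if_le
  · exact Real.continuous_exp.div_const 2
  · exact continuous_const.sub ((Real.continuous_exp.comp continuous_neg).div_const 2)
  · exact continuous_id
  · exact continuous_const
  · intro x hx
    simp [hx]
    norm_num

lemma ThetaClip_eq_phi (α β : ℝ) (h : α < β) (t : ℝ) :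
    ThetaClip α β t = α + phiAux (t - α) - phiAux (t - β) := by
  unfold ThetaClip thetaClip phiAux
  rw [abs_sub_comm α t, abs_sub_comm β t]
  rcases le_total t α with h1 | h1 <;> rcases le_total t β with h2 | h2
  · rw [min_eq_right h2, max_eq_left h1,
      max_eq_left (by linarith : t - α ≤ 0), max_eq_left (by linarith : t - β ≤ 0)]
    ring
  · linarith
  · rw [min_eq_right h2, max_eq_right h1,
      max_eq_right (by linarith : (0:ℝ) ≤ t - α), max_eq_left (by linarith : t - β ≤ 0)]
    ring
  · rw [min_eq_left h2, max_eq_right h.le,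
      max_eq_right (by linarith : (0:ℝ) ≤ t - α), max_eq_right (by linarith : (0:ℝ) ≤ t - β)]
    ring

lemma ThetaClipDeriv_eq_phi (α β : ℝ) (h : α < β) (t : ℝ) :
    ThetaClipDeriv α β t = phiAuxDeriv (t - α) - phiAuxDeriv (t - β) := by
  unfold ThetaClipDeriv phiAuxDeriv
  rcases le_or_gt t α with h1 | h1
  · rw [if_pos h1, if_pos (by linarith : t - α ≤ 0), if_pos (by linarith : t - β ≤ 0)]
  · rcases le_or_gt t β with h2 | h2
    · rw [if_neg (not_le.mpr h1), if_pos h2, if_neg (by simp; linarith),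
        if_pos (by linarith : t - β ≤ 0)]
      try rw [show -(t - α) = α - t by ring]
      try ring
    · rw [if_neg (not_le.mpr h1), if_neg (not_le.mpr h2), if_neg (by simp; linarith),
        if_neg (by simp; linarith)]
      try rw [show -(t - α) = α - t by ring, show -(t - β) = β - t by ring]
      try ring

lemma hasDerivAt_ThetaClip (α β : ℝ) (h : α < β) (t : ℝ) :
    HasDerivAt (ThetaClip α β) (ThetaClipDeriv α β t) t := by
  have h1 : HasDerivAt (fun s : ℝ => phiAux (s - α)) (phiAuxDeriv (t - α)) t := by
    simpa [Function.comp_def] using (hasDerivAt_phiAux (t - α)).comp t ((hasDerivAt_id t).sub_const α)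
  have h2 : HasDerivAt (fun s : ℝ => phiAux (s - β)) (phiAuxDeriv (t - β)) t := by
    simpa [Function.comp_def] using (hasDerivAt_phiAux (t - β)).comp t ((hasDerivAt_id t).sub_const β)
  have : HasDerivAt (fun s : ℝ => α + phiAux (s - α) - phiAux (s - β))
      (0 + phiAuxDeriv (t - α) - phiAuxDeriv (t - β)) t := ((hasDerivAt_const t α).add h1).sub h2
  have heq : (fun s : ℝ => α + phiAux (s - α) - phiAux (s - β)) = ThetaClip α β := by
    funext s; rw [ThetaClip_eq_phi α β h s]
  rw [heq] at this
  rw [ThetaClipDeriv_eq_phi α β h]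
  simpa using this

lemma ThetaClipDeriv_pos (α β : ℝ) (h : α < β) (t : ℝ) : 0 < ThetaClipDeriv α β t := by
  unfold ThetaClipDeriv
  split_ifs with h1 h2
  · have := Real.exp_lt_exp.mpr (show t - β < t - α by linarith)
    linarith
  · have e1 : Real.exp (α - t) < 1 := Real.exp_lt_one_iff.mpr (by simp at h1; linarith)
    have e2 : Real.exp (t - β) ≤ 1 := Real.exp_le_one_iff.mpr (by linarith)
    linarith
  · have := Real.exp_lt_exp.mpr (show α - t < β - t by linarith)
    linarith

lemma tendsto_ThetaClip_atBot (α β : ℝ) (h : α < β) :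
    Filter.Tendsto (ThetaClip α β) Filter.atBot (nhds α) := by
  have hx : Filter.Tendsto (fun t : ℝ => α + Real.exp (t - α) / 2 - Real.exp (t - β) / 2)
      Filter.atBot (nhds (α + 0 / 2 - 0 / 2)) := by
    have ha : Filter.Tendsto (fun t : ℝ => Real.exp (t - α)) Filter.atBot (nhds 0) :=
      Real.tendsto_exp_atBot.comp (by
        simpa [sub_eq_add_neg] using
          Filter.tendsto_atBot_add_const_right Filter.atBot (-α) Filter.tendsto_id)
    have hb : Filter.Tendsto (fun t : ℝ => Real.exp (t - β)) Filter.atBot (nhds 0) :=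
      Real.tendsto_exp_atBot.comp (by
        simpa [sub_eq_add_neg] using
          Filter.tendsto_atBot_add_const_right Filter.atBot (-β) Filter.tendsto_id)
    exact ((tendsto_const_nhds.add (ha.div_const 2)).sub (hb.div_const 2))
  simp only [zero_div, add_zero, sub_zero] at hx
  apply hx.congr'
  filter_upwards [Filter.eventually_le_atBot α] with t ht
  rw [ThetaClip_eq_phi α β h, phiAux_of_nonpos (by linarith : t - α ≤ 0),
    phiAux_of_nonpos (by linarith : t - β ≤ 0)]

lemma tendsto_ThetaClip_atTop (α β : ℝ) (h : α < β) :
    Filter.Tendsto (ThetaClip α β) Filter.atTop (nhds β) := by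
  have hx : Filter.Tendsto (fun t : ℝ => β + Real.exp (-(t - α)) / 2 - Real.exp (-(t - β)) / 2)
      Filter.atTop (nhds (β + 0 / 2 - 0 / 2)) := by
    have ha : Filter.Tendsto (fun t : ℝ => Real.exp (-(t - α))) Filter.atTop (nhds 0) :=
      Real.tendsto_exp_atBot.comp (Filter.tendsto_neg_atBot_iff.mpr (by
        simpa [sub_eq_add_neg] using
          Filter.tendsto_atTop_add_const_right Filter.atTop (-α) Filter.tendsto_id))
    have hb : Filter.Tendsto (fun t : ℝ => Real.exp (-(t - β))) Filter.atTop (nhds 0) :=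
      Real.tendsto_exp_atBot.comp (Filter.tendsto_neg_atBot_iff.mpr (by
        simpa [sub_eq_add_neg] using
          Filter.tendsto_atTop_add_const_right Filter.atTop (-β) Filter.tendsto_id))
    exact ((tendsto_const_nhds.add (ha.div_const 2)).sub (hb.div_const 2))
  simp only [zero_div, add_zero, sub_zero] at hx
  apply hx.congr'
  filter_upwards [Filter.eventually_ge_atTop β] with t ht
  rw [ThetaClip_eq_phi α β h, phiAux_of_nonneg (by linarith : (0:ℝ) ≤ t - α),
    phiAux_of_nonneg (by linarith : (0:ℝ) ≤ t - β)]
  ring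

theorem ThetaClip_strictMono_homeo_C1 (α β : ℝ) (h : α < β) :
    StrictMono (ThetaClip α β) ∧
    (∃ e : ℝ ≃ₜ ↥(Set.Ioo α β), ∀ t : ℝ, (e t : ℝ) = ThetaClip α β t) ∧
    (∀ t : ℝ, HasDerivAt (ThetaClip α β) (ThetaClipDeriv α β t) t) ∧
    Continuous (ThetaClipDeriv α β) := by
  have hd := hasDerivAt_ThetaClip α β h
  have hmono : StrictMono (ThetaClip α β) :=
    strictMono_of_hasDerivAt_pos hd (ThetaClipDeriv_pos α β h)
  have hcont : Continuous (ThetaClip α β) := by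
    have : Differentiable ℝ (ThetaClip α β) := fun t => (hd t).differentiableAt
    exact this.continuous
  have hbot := tendsto_ThetaClip_atBot α β h
  have htop := tendsto_ThetaClip_atTop α β h
  have hmem : ∀ t : ℝ, ThetaClip α β t ∈ Set.Ioo α β := by
    intro t
    have hlow : α ≤ ThetaClip α β (t - 1) := by
      apply le_of_tendsto hbot
      filter_upwards [Filter.eventually_le_atBot (t - 1)] with s hs
      exact hmono.monotone hs
    have hhigh : ThetaClip α β (t + 1) ≤ β := by
      apply ge_of_tendsto htop
      filter_upwards [Filter.eventually_ge_atTop (t + 1)] with s hs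
      exact hmono.monotone hs
    exact ⟨lt_of_le_of_lt hlow (hmono (by linarith)),
      lt_of_lt_of_le (hmono (by linarith)) hhigh⟩
  refine ⟨hmono, ?_, hd, ?_⟩
  · set F : ℝ → ↥(Set.Ioo α β) := fun t => ⟨ThetaClip α β t, hmem t⟩ with hF
    have hFmono : StrictMono F := fun a b hab => by
      simp only [hF, Subtype.mk_lt_mk]
      exact hmono hab
    have hFsurj : Function.Surjective F := by
      rintro ⟨y, hy1, hy2⟩
      obtain ⟨a, ha⟩ := (hbot.eventually_lt_const hy1).exists
      obtain ⟨b, hb⟩ := (htop.eventually_const_lt hy2).exists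
      have hab : a ≤ b := (hmono.lt_iff_lt.mp (ha.trans hb)).le
      obtain ⟨t, _, ht⟩ := intermediate_value_Icc hab hcont.continuousOn
        ⟨ha.le, hb.le⟩
      exact ⟨t, Subtype.ext ht⟩
    exact ⟨(StrictMono.orderIsoOfSurjective F hFmono hFsurj).toHomeomorph, fun t => rfl⟩
  · have heq : ThetaClipDeriv α β = fun t => phiAuxDeriv (t - α) - phiAuxDeriv (t - β) := by
      funext t; exact ThetaClipDeriv_eq_phi α β h t
    rw [heq]
    exact (continuous_phiAuxDeriv.comp (continuous_id.sub continuous_const)).sub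
      (continuous_phiAuxDeriv.comp (continuous_id.sub continuous_const))
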